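/- arXiv:1704.03645 — 4 statements merged into one kernel-verified Lean document; each statement's English description precedes it below -/
import Mathlib

section
/- Let E and F be complex Hilbert spaces, let L be a linear map from a subspace dom(L) ⊆ E into F, and let L^g be a linear map from a subspace dom(L^g) ⊆ F into E such that: (i) range(L) ⊆ dom(L^g); (ii) range(L^g) ⊆ dom(L); (iii) for every x ∈ dom(L), L^g(L x) equals the orthogonal projection of x onto the topological closure of range(L^g); (iv) for every y ∈ dom(L^g), L(L^g y) equals the orthogonal projection of y onto the topological closure of range(L). Then null(L) = dom(L) ∩ (range(L^g))^⊥ and dom(L) ∩ (null(L))^⊥ = range(L^g). -/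
/-- **Tseng generalized inverse** (Ben-Israel–Greville, Ch. 9, Lemma 3).
If `Lg` is a Tseng generalized inverse of `L`, then
`null(L) = dom(L) ∩ (range Lg)ᗮ` and `dom(L) ∩ (null L)ᗮ = range Lg`. -/
theorem tseng_generalized_inverse_null_car
    {E F : Type*} [NormedAddCommGroup E] [InnerProductSpace ℂ E] [CompleteSpace E]
    [NormedAddCommGroup F] [InnerProductSpace ℂ F] [CompleteSpace F]
    (domL : Submodule ℂ E) (domLg : Submodule ℂ F)
    (L : domL →ₗ[ℂ] F) (Lg : domLg →ₗ[ℂ] E)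
    (h1 : LinearMap.range L ≤ domLg)
    (h2 : LinearMap.range Lg ≤ domL)
    (h3 : ∀ x : domL, Lg ⟨L x, h1 ⟨x, rfl⟩⟩ =
      (Submodule.orthogonalProjectionOnto (LinearMap.range Lg).topologicalClosure (x : E) : E))
    (h4 : ∀ y : domLg, L ⟨Lg y, h2 ⟨y, rfl⟩⟩ =
      (Submodule.orthogonalProjectionOnto (LinearMap.range L).topologicalClosure (y : F) : F)) :
    (LinearMap.ker L).map domL.subtype = domL ⊓ (LinearMap.range Lg)ᗮ ∧
    domL ⊓ ((LinearMap.ker L).map domL.subtype)ᗮ = LinearMap.range Lg := by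
  set R := LinearMap.range Lg with hR
  set N := (LinearMap.ker L).map domL.subtype with hN
  have hclo : (R.topologicalClosure)ᗮ = Rᗮ := by
    rw [← R.orthogonal_orthogonal_eq_closure, Submodule.triorthogonal_eq_orthogonal]
  -- membership characterization of N
  have hNmem : ∀ z : E, z ∈ N ↔ ∃ hz : z ∈ domL, L ⟨z, hz⟩ = 0 := by
    intro z
    constructor
    · rintro ⟨⟨w, hw⟩, hk, rfl⟩
      exact ⟨hw, hk⟩
    · rintro ⟨hz, hLz⟩
      exact ⟨⟨z, hz⟩, hLz, rfl⟩
  -- first claim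
  have claim1 : N = domL ⊓ Rᗮ := by
    ext z
    rw [hNmem, Submodule.mem_inf]
    constructor
    · rintro ⟨hz, hLz⟩
      refine ⟨hz, ?_⟩
      rw [← hclo, ← Submodule.orthogonalProjectionOnto_eq_zero_iff]
      have := h3 ⟨z, hz⟩
      have h0 : (⟨L ⟨z, hz⟩, h1 ⟨⟨z, hz⟩, rfl⟩⟩ : domLg) = 0 := by
        ext; simpa using hLz
      rw [h0, map_zero] at this
      have : ((Submodule.orthogonalProjectionOnto R.topologicalClosure z : E)) = 0 := by
        simpa using this.symm
      exact Subtype.ext (by simpa using this)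
    · rintro ⟨hz, hperp⟩
      refine ⟨hz, ?_⟩
      -- orthogonal projection of z is 0, so Lg (L z) = 0
      have hp0 : Submodule.orthogonalProjectionOnto R.topologicalClosure z = 0 := by
        rw [Submodule.orthogonalProjectionOnto_eq_zero_iff, hclo]; exact hperp
      have hLg0 : Lg ⟨L ⟨z, hz⟩, h1 ⟨⟨z, hz⟩, rfl⟩⟩ = 0 := by
        rw [h3 ⟨z, hz⟩, hp0]; simp
      -- apply h4 to y = L z
      have := h4 ⟨L ⟨z, hz⟩, h1 ⟨⟨z, hz⟩, rfl⟩⟩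
      have hself : ((Submodule.orthogonalProjectionOnto (LinearMap.range L).topologicalClosure
          (L ⟨z, hz⟩) : F)) = L ⟨z, hz⟩ := by
        refine Submodule.starProjection_eq_self_iff.mpr ?_
        exact (LinearMap.range L).le_topologicalClosure ⟨⟨z, hz⟩, rfl⟩
      rw [hself] at this
      have h0' : (⟨Lg ⟨L ⟨z, hz⟩, h1 ⟨⟨z, hz⟩, rfl⟩⟩,
          h2 ⟨⟨L ⟨z, hz⟩, h1 ⟨⟨z, hz⟩, rfl⟩⟩, rfl⟩⟩ : domL) = 0 := by
        ext; simpa using hLg0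
      rw [h0', map_zero] at this
      exact this.symm
  refine ⟨claim1, ?_⟩
  -- N ≤ Rᗮ hence R ≤ Nᗮ
  have hNR : N ≤ Rᗮ := claim1.le.trans inf_le_right
  have hRN : R ≤ Nᗮ := by
    intro r hr
    intro n hn
    exact (Submodule.mem_orthogonal' _ _).mp (hNR hn) r hr
  apply le_antisymm
  · -- domL ⊓ Nᗮ ≤ R
    rintro x ⟨hxd, hxn⟩
    -- x = Lg (L x) + z with z ∈ N, and x ⊥ N
    set p : E := Lg ⟨L ⟨x, hxd⟩, h1 ⟨⟨x, hxd⟩, rfl⟩⟩ with hp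
    have hpR : p ∈ R := ⟨_, rfl⟩
    have hpdom : p ∈ domL := h2 hpR
    have hproj : p = (Submodule.orthogonalProjectionOnto R.topologicalClosure x : E) := h3 ⟨x, hxd⟩
    have hzperp : x - p ∈ Rᗮ := by
      rw [← hclo, hproj]
      exact Submodule.sub_starProjection_mem_orthogonal x
    have hzN : x - p ∈ N := by
      rw [claim1]
      exact ⟨domL.sub_mem hxd hpdom, hzperp⟩
    have hx_perp : (inner ℂ (x - p) (x - p) : ℂ) = 0 := by
      have h1' : (inner ℂ x (x - p) : ℂ) = 0 := by
        have := hxn (x - p) hzN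
        rw [← inner_conj_symm]
        simp [this]
      have h2' : (inner ℂ p (x - p) : ℂ) = 0 := by
        have := hRN hpR (x - p) hzN
        rw [← inner_conj_symm]
        simp [this]
      rw [inner_sub_left, h1', h2', sub_zero]
    have hxp : x = p := sub_eq_zero.mp (inner_self_eq_zero.mp hx_perp)
    rw [hxp]; exact hpR
  · -- R ≤ domL ⊓ Nᗮ
    intro r hr
    exact ⟨h2 hr, hRN hr⟩
end

section
/- Let H₀ be a nonzero real number and let u : ℝ × ℝ → ℝ be continuous, 2π-periodic in the second variable, with continuous time derivative ∂ₜu, satisfying for all t, x the integral form of the sine-Gordon equation: ∂ₜu(t,x) = 𝒟(sin∘u(t,·))(x) − C̃(u(t,·))/H₀. If ∫₀^{2π} sin(u(0,x)) dx = 0 and ∫₀^{2π} cos(u(0,x)) dx = H₀, then for every t, ∫₀^{2π} sin(u(t,x)) dx = 0 and ∫₀^{2π} cos(u(t,x)) dx = H₀. -/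
open Real intervalIntegral

/-- The mean value `f̄ = (1/(2π)) ∫₀^{2π} f(y) dy` of a `2π`-periodic function. -/
noncomputable def fmean (f : ℝ → ℝ) : ℝ := (1 / (2 * π)) * ∫ y in (0:ℝ)..(2 * π), f y

/-- The antiderivative operator `𝒟`, the realization on continuous functions of the
maximal Tseng generalized inverse `∂ₓ†` of the spatial derivative on `𝕊 = ℝ/2πℤ`. -/
noncomputable def Dop (f : ℝ → ℝ) (x : ℝ) : ℝ :=
  (∫ y in (0:ℝ)..x, (f y - fmean f)) -
    (1 / (2 * π)) * ∫ z in (0:ℝ)..(2 * π), (∫ y in (0:ℝ)..z, (f y - fmean f))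

/-- `C̃(v) = ∫₀^{2π} cos(v(x)) ⬝ 𝒟(sin∘v)(x) dx`. -/
noncomputable def Ctilde (v : ℝ → ℝ) : ℝ :=
  ∫ x in (0:ℝ)..(2 * π), Real.cos (v x) * Dop (fun y => Real.sin (v y)) x

open MeasureTheory Set

lemma Dop_continuous {f : ℝ → ℝ} (hf : Continuous f) : Continuous (Dop f) := by
  unfold Dop
  exact (intervalIntegral.continuous_primitive
    (fun a b => ((hf.sub continuous_const)).intervalIntegrable a b) 0).sub continuous_const

/-- `∫₀^{2π} g · 𝒟g = 0` for continuous `g`. -/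
lemma integral_mul_Dop_self {g : ℝ → ℝ} (hg : Continuous g) :
    (∫ x in (0:ℝ)..(2 * π), g x * Dop g x) = 0 := by
  set m := fmean g with hm
  set G : ℝ → ℝ := fun x => ∫ y in (0:ℝ)..x, (g y - m) with hGdef
  have hgmc : Continuous (fun y => g y - m) := hg.sub continuous_const
  have hgi : ∀ a b : ℝ, IntervalIntegrable (fun y => g y - m) volume a b :=
    fun a b => hgmc.intervalIntegrable a b
  have hGcont : Continuous G := intervalIntegral.continuous_primitive hgi 0
  have hGderiv : ∀ x : ℝ, HasDerivAt G (g x - m) x := fun x =>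
    intervalIntegral.integral_hasDerivAt_right (hgi 0 x)
      (hgmc.stronglyMeasurableAtFilter _ _) hgmc.continuousAt
  set c : ℝ := (1 / (2 * π)) * ∫ z in (0:ℝ)..(2 * π), G z with hc
  have hDop : ∀ x, Dop g x = G x - c := fun x => rfl
  have hG0 : G 0 = 0 := intervalIntegral.integral_same
  have hG2π : G (2 * π) = 0 := by
    have h1 : G (2 * π) = (∫ y in (0:ℝ)..(2 * π), g y) - (2 * π) * m := by
      show (∫ y in (0:ℝ)..(2 * π), (g y - m)) = _
      rw [intervalIntegral.integral_sub (hg.intervalIntegrable _ _) intervalIntegrable_const]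
      simp [smul_eq_mul]
    rw [h1, hm, fmean]
    have hπ : (2 * π) ≠ 0 := by positivity
    field_simp
    ring
  -- ∫ (g - m) * G = 0
  have I1 : (∫ x in (0:ℝ)..(2 * π), (g x - m) * G x) = 0 := by
    have hd : ∀ x ∈ uIcc (0:ℝ) (2 * π), HasDerivAt (fun x => G x * G x / 2) ((g x - m) * G x) x := by
      intro x _
      have : HasDerivAt (fun x => G x * G x / 2) (((g x - m) * G x + G x * (g x - m)) / 2) x :=
        ((hGderiv x).mul (hGderiv x)).div_const 2
      convert this using 1
      ring
    have := intervalIntegral.integral_eq_sub_of_hasDerivAt hd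
      ((hgmc.mul hGcont).intervalIntegrable _ _)
    rw [this, hG0, hG2π]
    ring
  -- ∫ (g - m) = 0
  have I2 : (∫ x in (0:ℝ)..(2 * π), (g x - m)) = 0 := hG2π
  -- ∫ (G - c) = 0
  have I3 : (∫ x in (0:ℝ)..(2 * π), (G x - c)) = 0 := by
    rw [intervalIntegral.integral_sub (hGcont.intervalIntegrable _ _) intervalIntegrable_const]
    simp only [intervalIntegral.integral_const, smul_eq_mul, sub_zero]
    rw [hc]
    have hπ : (2 * π) ≠ 0 := by positivity
    field_simp
    ring
  have hsplit : (fun x => g x * Dop g x)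
      = fun x => (((g x - m) * G x) - c * (g x - m)) + m * (G x - c) := by
    funext x
    rw [hDop x]
    ring
  rw [hsplit]
  rw [intervalIntegral.integral_add
    (by exact ((hgmc.mul hGcont).sub (continuous_const.mul hgmc)).intervalIntegrable _ _)
    (by exact (continuous_const.mul (hGcont.sub continuous_const)).intervalIntegrable _ _)]
  rw [intervalIntegral.integral_sub (by exact (hgmc.mul hGcont).intervalIntegrable _ _)
    (by exact (continuous_const.mul hgmc).intervalIntegrable _ _)]
  rw [intervalIntegral.integral_const_mul, intervalIntegral.integral_const_mul, I1, I2, I3]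
  ring

/-- Differentiation under the interval integral for continuous data. -/
lemma hasDerivAt_param (f f' : ℝ → ℝ → ℝ) (hf : Continuous (Function.uncurry f))
    (hf' : Continuous (Function.uncurry f'))
    (hd : ∀ s x : ℝ, HasDerivAt (fun s => f s x) (f' s x) s) (t : ℝ) :
    HasDerivAt (fun s => ∫ x in (0:ℝ)..(2 * π), f s x) (∫ x in (0:ℝ)..(2 * π), f' t x) t := by
  obtain ⟨M, hM⟩ : ∃ M, ∀ p ∈ (Metric.closedBall t 1) ×ˢ (uIcc (0:ℝ) (2 * π)),
      ‖Function.uncurry f' p‖ ≤ M :=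
    ((isCompact_closedBall t 1).prod isCompact_uIcc).exists_bound_of_continuousOn
      hf'.continuousOn
  have key := intervalIntegral.hasDerivAt_integral_of_dominated_loc_of_deriv_le
    (F := f) (F' := f') (x₀ := t) (a := (0:ℝ)) (b := 2 * π) (bound := fun _ => M)
    (μ := volume) (s := Metric.ball t 1) (Metric.ball_mem_nhds t one_pos)
    (Filter.Eventually.of_forall fun s =>
      ((hf.comp (Continuous.prodMk_right s)).aestronglyMeasurable))
    ((hf.comp (Continuous.prodMk_right t)).intervalIntegrable _ _)
    ((hf'.comp (Continuous.prodMk_right t)).aestronglyMeasurable)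
    (Filter.Eventually.of_forall fun x hx s hs =>
      hM (s, x) ⟨Metric.ball_subset_closedBall hs, uIoc_subset_uIcc hx⟩)
    intervalIntegrable_const
    (Filter.Eventually.of_forall fun x _ s _ => hd s x)
  exact key.2

/-- Conservation laws for the integral form of the sine-Gordon equation
`∂ₜu = 𝒟(sin∘u(t,·)) − C̃(u(t,·))/H₀`: if `ℱ(u(0,·)) = 0` and `ℋ(u(0,·)) = H₀`, then
`ℱ(u(t,·)) = 0` and `ℋ(u(t,·)) = H₀` for all `t`. -/
theorem sineGordon_integral_form_conservation (H₀ : ℝ) (hH₀ : H₀ ≠ 0)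
    (u ut : ℝ → ℝ → ℝ)
    (hu : Continuous (Function.uncurry u))
    (hper : ∀ t x : ℝ, u t (x + 2 * π) = u t x)
    (hut : Continuous (Function.uncurry ut))
    (hderiv : ∀ t x : ℝ, HasDerivAt (fun s => u s x) (ut t x) t)
    (heq : ∀ t x : ℝ, ut t x = Dop (fun y => Real.sin (u t y)) x - Ctilde (u t) / H₀)
    (hF0 : (∫ x in (0:ℝ)..(2 * π), Real.sin (u 0 x)) = 0)
    (hH0 : (∫ x in (0:ℝ)..(2 * π), Real.cos (u 0 x)) = H₀) :
    ∀ t : ℝ, (∫ x in (0:ℝ)..(2 * π), Real.sin (u t x)) = 0 ∧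
      (∫ x in (0:ℝ)..(2 * π), Real.cos (u t x)) = H₀ := by
  set F : ℝ → ℝ := fun t => ∫ x in (0:ℝ)..(2 * π), Real.sin (u t x) with hFdef
  set H : ℝ → ℝ := fun t => ∫ x in (0:ℝ)..(2 * π), Real.cos (u t x) with hHdef
  have hcu : ∀ t, Continuous (u t) := fun t => hu.comp (Continuous.prodMk_right t)
  have hcsin : ∀ t, Continuous (fun y => Real.sin (u t y)) :=
    fun t => Real.continuous_sin.comp (hcu t)
  have hccos : ∀ t, Continuous (fun y => Real.cos (u t y)) :=
    fun t => Real.continuous_cos.comp (hcu t)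
  have hDopc : ∀ t, Continuous (Dop (fun y => Real.sin (u t y))) :=
    fun t => Dop_continuous (hcsin t)
  -- derivative of F
  have hFd : ∀ t, HasDerivAt F (Ctilde (u t) - H t * (Ctilde (u t) / H₀)) t := by
    intro t
    have h1 : HasDerivAt F (∫ x in (0:ℝ)..(2 * π), Real.cos (u t x) * ut t x) t := by
      apply hasDerivAt_param (fun s x => Real.sin (u s x)) (fun s x => Real.cos (u s x) * ut s x)
        (Real.continuous_sin.comp hu) ((Real.continuous_cos.comp hu).mul hut)
        (fun s x => (hderiv s x).sin) t
    have h2 : (∫ x in (0:ℝ)..(2 * π), Real.cos (u t x) * ut t x)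
        = Ctilde (u t) - H t * (Ctilde (u t) / H₀) := by
      have : (fun x => Real.cos (u t x) * ut t x)
          = fun x => Real.cos (u t x) * Dop (fun y => Real.sin (u t y)) x
              - Real.cos (u t x) * (Ctilde (u t) / H₀) := by
        funext x; rw [heq t x]; ring
      rw [this, intervalIntegral.integral_sub
        (by exact ((hccos t).mul (hDopc t)).intervalIntegrable _ _)
        (by exact ((hccos t).mul continuous_const).intervalIntegrable _ _),
        intervalIntegral.integral_mul_const]
      rfl
    rwa [h2] at h1
  -- derivative of H
  have hHd : ∀ t, HasDerivAt H (F t * (Ctilde (u t) / H₀)) t := by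
    intro t
    have h1 : HasDerivAt H (∫ x in (0:ℝ)..(2 * π), -Real.sin (u t x) * ut t x) t := by
      apply hasDerivAt_param (fun s x => Real.cos (u s x)) (fun s x => -Real.sin (u s x) * ut s x)
        (Real.continuous_cos.comp hu) (((Real.continuous_sin.comp hu).neg).mul hut)
        (fun s x => (hderiv s x).cos) t
    have h2 : (∫ x in (0:ℝ)..(2 * π), -Real.sin (u t x) * ut t x)
        = F t * (Ctilde (u t) / H₀) := by
      have heqfun : (fun x => -Real.sin (u t x) * ut t x)
          = fun x => Real.sin (u t x) * (Ctilde (u t) / H₀)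
              - Real.sin (u t x) * Dop (fun y => Real.sin (u t y)) x := by
        funext x; rw [heq t x]; ring
      rw [heqfun, intervalIntegral.integral_sub
        (by exact ((hcsin t).mul continuous_const).intervalIntegrable _ _)
        (by exact ((hcsin t).mul (hDopc t)).intervalIntegrable _ _),
        intervalIntegral.integral_mul_const, integral_mul_Dop_self (hcsin t), sub_zero]
    rwa [h2] at h1
  -- energy function
  set E : ℝ → ℝ := fun t => F t * F t + (H t - H₀) * (H t - H₀) with hEdef
  have hEd : ∀ t, HasDerivAt E 0 t := by
    intro t
    have h := ((hFd t).mul (hFd t)).add (((hHd t).sub_const H₀).mul ((hHd t).sub_const H₀))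
    have key : ((Ctilde (u t) - H t * (Ctilde (u t) / H₀)) * F t
          + F t * (Ctilde (u t) - H t * (Ctilde (u t) / H₀)))
        + ((F t * (Ctilde (u t) / H₀)) * (H t - H₀)
          + (H t - H₀) * (F t * (Ctilde (u t) / H₀))) = 0 := by
      field_simp
      ring
    rwa [key] at h
  have hEconst : ∀ t, E t = E 0 := fun t =>
    is_const_of_deriv_eq_zero (fun s => (hEd s).differentiableAt) (fun s => (hEd s).deriv) t 0
  have hE0 : E 0 = 0 := by
    simp only [hEdef]
    have h1 : F 0 = 0 := hF0
    have h2 : H 0 = H₀ := hH0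
    rw [h1, h2]; ring
  intro t
  have hEt : F t * F t + (H t - H₀) * (H t - H₀) = 0 := by
    have := hEconst t; rw [hE0] at this; exact this
  have hF : F t = 0 := by
    have h1 : F t * F t = 0 := by nlinarith [mul_self_nonneg (F t), mul_self_nonneg (H t - H₀)]
    exact mul_self_eq_zero.mp h1
  have hHt : H t = H₀ := by
    have h1 : (H t - H₀) * (H t - H₀) = 0 := by
      nlinarith [mul_self_nonneg (F t), mul_self_nonneg (H t - H₀)]
    have := mul_self_eq_zero.mp h1
    linarith
  exact ⟨hF, hHt⟩
end

section
/- Let u : ℝ × ℝ → ℝ be twice continuously differentiable, 2π-periodic in the second variable, and satisfy the modified short pulse equation ∂ₓ(∂ₜu)(t,x) = u(t,x) + (1/2)·u(t,x)·∂ₓ²(u²)(t,x) for all t, x. Then the function t ↦ ∫₀^{2π} (∂ₓu(t,x))² dx is constant. Consequently, if ∫₀^{2π} (∂ₓu(0,x))² dx ≠ 2π, then 2π − ∫₀^{2π} (∂ₓu(t,x))² dx ≠ 0 for all t (so the nondegeneracy condition ⟨δℱ/δu, 1⟩ ≠ 0 holds for all time along the solution). -/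
open Real intervalIntegral MeasureTheory Metric

/-- For a classical `2π`-periodic-in-space solution `u` of the modified short pulse
equation `u_{tx} = u + (1/2)u(u²)_{xx}`, the quantity `∫₀^{2π} u_x² dx` is conserved;
consequently, if `∫₀^{2π} u_x(0,x)² dx ≠ 2π`, then the nondegeneracy condition
`2π − ∫₀^{2π} u_x(t,x)² dx ≠ 0` holds for all `t`. -/
theorem modifiedShortPulse_conservation_and_nondegeneracy (u : ℝ → ℝ → ℝ)
    (hu : ContDiff ℝ 2 (Function.uncurry u))
    (hper : ∀ t x : ℝ, u t (x + 2 * π) = u t x)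
    (hpde : ∀ t x : ℝ, deriv (fun y => deriv (fun s => u s y) t) x =
      u t x + (1 / 2) * u t x * deriv (fun y => deriv (fun z => (u t z) ^ 2) y) x) :
    (∀ t₁ t₂ : ℝ,
      (∫ x in (0:ℝ)..(2 * π), (deriv (u t₁) x) ^ 2) =
        ∫ x in (0:ℝ)..(2 * π), (deriv (u t₂) x) ^ 2) ∧
    ((∫ x in (0:ℝ)..(2 * π), (deriv (u 0) x) ^ 2) ≠ 2 * π →
      ∀ t : ℝ, 2 * π - (∫ x in (0:ℝ)..(2 * π), (deriv (u t) x) ^ 2) ≠ 0) := by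
  set U : ℝ × ℝ → ℝ := Function.uncurry u with hUdef
  set f' : ℝ × ℝ → (ℝ × ℝ →L[ℝ] ℝ) := fderiv ℝ U with hf'def
  set f'' : ℝ × ℝ → (ℝ × ℝ →L[ℝ] (ℝ × ℝ →L[ℝ] ℝ)) := fderiv ℝ f' with hf''def
  have hU1 : ContDiff ℝ 1 f' := hu.fderiv_right (by norm_num)
  have hdU : ∀ p, HasFDerivAt U (f' p) p := fun p =>
    ((hu.differentiable (by norm_num)) p).hasFDerivAt
  have hdf' : ∀ p, HasFDerivAt f' (f'' p) p := fun p =>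
    ((hU1.differentiable one_ne_zero) p).hasFDerivAt
  have hcf' : Continuous f' := hU1.continuous
  have hcf'' : Continuous f'' := hU1.continuous_fderiv one_ne_zero
  -- slice lines
  have hx_line : ∀ t x : ℝ, HasDerivAt (fun y : ℝ => ((t, y) : ℝ × ℝ)) (0, 1) x := fun t x =>
    (hasDerivAt_const x t).prodMk (hasDerivAt_id x)
  have ht_line : ∀ t x : ℝ, HasDerivAt (fun s : ℝ => ((s, x) : ℝ × ℝ)) (1, 0) t := fun t x =>
    (hasDerivAt_id t).prodMk (hasDerivAt_const t x)
  -- partial derivatives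
  have hux : ∀ t x, HasDerivAt (u t) (f' (t, x) (0, 1)) x := fun t x =>
    (hdU (t, x)).comp_hasDerivAt x (hx_line t x)
  have hut : ∀ t x, HasDerivAt (fun s => u s x) (f' (t, x) (1, 0)) t := fun t x =>
    by have := (hdU (t, x)).comp_hasDerivAt t (ht_line t x); exact this
  set w : ℝ → ℝ → ℝ := fun t x => f' (t, x) (0, 1) with hwdef
  -- second partials via evaluation
  have hwx : ∀ t x, HasDerivAt (fun y => f' (t, y) (0, 1)) (f'' (t, x) (0, 1) (0, 1)) x := by
    intro t x
    have h1 : HasDerivAt (fun y => f' (t, y)) (f'' (t, x) (0, 1)) x :=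
      (hdf' (t, x)).comp_hasDerivAt x (hx_line t x)
    simpa using h1.clm_apply (hasDerivAt_const x ((0 : ℝ), (1 : ℝ)))
  have hvx : ∀ t x, HasDerivAt (fun y => f' (t, y) (1, 0)) (f'' (t, x) (0, 1) (1, 0)) x := by
    intro t x
    have h1 : HasDerivAt (fun y => f' (t, y)) (f'' (t, x) (0, 1)) x :=
      (hdf' (t, x)).comp_hasDerivAt x (hx_line t x)
    simpa using h1.clm_apply (hasDerivAt_const x ((1 : ℝ), (0 : ℝ)))
  have hwt : ∀ t x, HasDerivAt (fun s => f' (s, x) (0, 1)) (f'' (t, x) (1, 0) (0, 1)) t := by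
    intro t x
    have h1 : HasDerivAt (fun s => f' (s, x)) (f'' (t, x) (1, 0)) t :=
      (hdf' (t, x)).comp_hasDerivAt t (ht_line t x)
    simpa using h1.clm_apply (hasDerivAt_const t ((0 : ℝ), (1 : ℝ)))
  have hsymm : ∀ t x : ℝ, f'' (t, x) (1, 0) (0, 1) = f'' (t, x) (0, 1) (1, 0) := fun t x =>
    second_derivative_symmetric hdU (hdf' (t, x)) _ _
  -- translate the PDE
  have hpde' : ∀ t x : ℝ, f'' (t, x) (0, 1) (1, 0) =
      u t x + u t x * (w t x) ^ 2 + (u t x) ^ 2 * f'' (t, x) (0, 1) (0, 1) := by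
    intro t x
    have e1 : (fun y => deriv (fun s => u s y) t) = fun y => f' (t, y) (1, 0) :=
      funext fun y => (hut t y).deriv
    have e2 : (fun y => deriv (fun z => (u t z) ^ 2) y) = fun y => 2 * u t y * w t y := by
      funext y
      have : HasDerivAt (fun z => (u t z) ^ 2) (2 * u t y ^ 1 * w t y) y := (hux t y).pow 2
      simpa using this.deriv
    have h := hpde t x
    rw [e1, e2] at h
    have hL : deriv (fun y => f' (t, y) (1, 0)) x = f'' (t, x) (0, 1) (1, 0) := (hvx t x).deriv
    have hR : deriv (fun y => 2 * u t y * w t y) x =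
        2 * w t x * w t x + 2 * u t x * f'' (t, x) (0, 1) (0, 1) := by
      have : HasDerivAt (fun y => 2 * u t y * w t y)
          ((2 * w t x) * w t x + (2 * u t x) * f'' (t, x) (0, 1) (0, 1)) x :=
        ((hux t x).const_mul 2).mul (hwx t x)
      simpa using this.deriv
    rw [hL, hR] at h
    rw [h]; ring
  -- periodicity of w
  have hwper : ∀ t x : ℝ, w t (x + 2 * π) = w t x := by
    intro t x
    have hshift : HasDerivAt (fun y : ℝ => y + 2 * π) 1 x := (hasDerivAt_id x).add_const _
    have h1 : HasDerivAt (fun y => u t (y + 2 * π)) (w t (x + 2 * π) * 1) x :=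
      (hux t (x + 2 * π)).comp x hshift
    have h2 : (fun y => u t (y + 2 * π)) = u t := funext fun y => hper t y
    rw [h2, mul_one] at h1
    exact h1.unique (hux t x)
  -- the energy integrand as w
  have hInt : ∀ t : ℝ, (∫ x in (0:ℝ)..(2 * π), (deriv (u t) x) ^ 2) =
      ∫ x in (0:ℝ)..(2 * π), (w t x) ^ 2 := by
    intro t
    exact intervalIntegral.integral_congr fun x _ => by rw [(hux t x).deriv]
  -- continuity helpers
  have hcw : Continuous fun p : ℝ × ℝ => f' p (0, 1) := hcf'.clm_apply continuous_const
  have hcA : Continuous fun p : ℝ × ℝ => 2 * f' p (0, 1) * f'' p (1, 0) (0, 1) :=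
    (continuous_const.mul hcw).mul
      ((hcf''.clm_apply continuous_const).clm_apply continuous_const)
  -- the time derivative of the energy vanishes
  have key : ∀ t₀ : ℝ, HasDerivAt (fun t => ∫ x in (0:ℝ)..(2 * π), (w t x) ^ 2) 0 t₀ := by
    intro t₀
    set G : ℝ → ℝ → ℝ := fun t x => 2 * w t x * f'' (t, x) (1, 0) (0, 1) with hGdef
    obtain ⟨C, hC⟩ := ((isCompact_Icc (a := t₀ - 1) (b := t₀ + 1)).prod
      (isCompact_uIcc (a := (0:ℝ)) (b := 2 * π))).exists_bound_of_continuousOn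
      hcA.continuousOn
    have main := intervalIntegral.hasDerivAt_integral_of_dominated_loc_of_deriv_le
      (F := fun t x => (w t x) ^ 2) (F' := G) (x₀ := t₀) (a := 0) (b := 2 * π)
      (μ := volume) (bound := fun _ => C) (s := ball t₀ 1) (ball_mem_nhds t₀ one_pos)
      (Filter.Eventually.of_forall fun t =>
        ((hcw.comp (Continuous.prodMk_right t)).pow 2).aestronglyMeasurable)
      (((hcw.comp (Continuous.prodMk_right t₀)).pow 2).intervalIntegrable 0 (2 * π))
      ((hcA.comp (Continuous.prodMk_right t₀)).aestronglyMeasurable)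
      (Filter.Eventually.of_forall fun x hx t ht => by
        have ht' : t ∈ Set.Icc (t₀ - 1) (t₀ + 1) := by
          have := mem_ball_iff_norm.mp ht
          rw [Real.norm_eq_abs, abs_lt] at this
          constructor <;> linarith [this.1, this.2]
        exact hC (t, x) ⟨ht', Set.uIoc_subset_uIcc hx⟩)
      (intervalIntegrable_const)
      (Filter.Eventually.of_forall fun x _ t _ => by
        have h : HasDerivAt (fun s => (w s x) ^ 2) (2 * w t x ^ 1 * f'' (t, x) (1, 0) (0, 1)) t :=
          (hwt t x).pow 2
        simpa using h)
    have hzero : (∫ x in (0:ℝ)..(2 * π), G t₀ x) = 0 := by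
      set H : ℝ → ℝ := fun x => (u t₀ x) ^ 2 + (u t₀ x) ^ 2 * (w t₀ x) ^ 2 with hHdef
      have hH : ∀ x : ℝ, HasDerivAt H (G t₀ x) x := by
        intro x
        have h1 : HasDerivAt (fun y => (u t₀ y) ^ 2) (2 * u t₀ x ^ 1 * w t₀ x) x :=
          (hux t₀ x).pow 2
        have h2 : HasDerivAt (fun y => (w t₀ y) ^ 2)
            (2 * w t₀ x ^ 1 * f'' (t₀, x) (0, 1) (0, 1)) x := (hwx t₀ x).pow 2
        have h3 : HasDerivAt H _ x := h1.add (h1.mul h2)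
        convert h3 using 1
        have hs := hsymm t₀ x
        have hp := hpde' t₀ x
        simp only [hGdef, pow_one]
        rw [hs, hp]; ring
      have hFTC : (∫ x in (0:ℝ)..(2 * π), G t₀ x) = H (2 * π) - H 0 :=
        intervalIntegral.integral_eq_sub_of_hasDerivAt (fun x _ => hH x)
          ((hcA.comp (Continuous.prodMk_right t₀)).intervalIntegrable 0 (2 * π))
      have hper' : H (2 * π) = H 0 := by
        have e1 : u t₀ (2 * π) = u t₀ 0 := by
          have := hper t₀ 0; rwa [zero_add] at this
        have e2 : w t₀ (2 * π) = w t₀ 0 := by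
          have := hwper t₀ 0; rwa [zero_add] at this
        simp [hHdef, e1, e2]
      rw [hFTC, hper', sub_self]
    have h2 := main.2
    rw [hzero] at h2
    exact h2
  have hconst : ∀ t₁ t₂ : ℝ,
      (∫ x in (0:ℝ)..(2 * π), (w t₁ x) ^ 2) = ∫ x in (0:ℝ)..(2 * π), (w t₂ x) ^ 2 :=
    fun t₁ t₂ => is_const_of_deriv_eq_zero
      (fun t => (key t).differentiableAt) (fun t => (key t).deriv) t₁ t₂
  constructor
  · intro t₁ t₂
    rw [hInt t₁, hInt t₂]
    exact hconst t₁ t₂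
  · intro h0 t
    have heq : (∫ x in (0:ℝ)..(2 * π), (deriv (u t) x) ^ 2) =
        ∫ x in (0:ℝ)..(2 * π), (deriv (u 0) x) ^ 2 := by
      rw [hInt t, hInt 0]; exact hconst t 0
    rw [heq]
    exact sub_ne_zero_of_ne (Ne.symm h0)
end

section
/- Let γ ∈ ℝ and let v : ℝ → ℝ be twice continuously differentiable and 2π-periodic. Then (1/(2π)) ∫₀^{2π} (1 − v''(x)) · [ (1/2)·(v²)'(x) + (γ/6)·v'(x)³ − 𝒟(v + (1/2)(v')²)(x) ] dx = (γ/(12π)) ∫₀^{2π} v'(x)³ dx; that is, the constant term 𝒞(v) in the integral form of the modified Hunter–Saxton equation equals (γ/(12π))∫ v_x³ dx. -/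
open Real intervalIntegral

namespace MHSaux

lemma periodic_deriv {f : ℝ → ℝ} {T : ℝ} (h : Function.Periodic f T) :
    Function.Periodic (deriv f) T := by
  intro x
  have h1 : (fun y => f (y + T)) = f := funext h
  calc deriv f (x + T) = deriv (fun y => f (y + T)) x := (deriv_comp_add_const f T x).symm
    _ = deriv f x := by rw [h1]

/-- `f = v + (1/2) v'²`. -/
noncomputable def ff (v : ℝ → ℝ) : ℝ → ℝ := fun y => v y + (1 / 2) * (deriv v y) ^ 2

/-- The mean of `f`. -/
noncomputable def mm (v : ℝ → ℝ) : ℝ := fmean (ff v)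

/-- `W(x) = ∫₀ˣ (f - f̄)`. -/
noncomputable def Wf (v : ℝ → ℝ) : ℝ → ℝ := fun x => ∫ y in (0:ℝ)..x, (ff v y - mm v)

/-- `c = (1/(2π)) ∫₀^{2π} W`. -/
noncomputable def cc (v : ℝ → ℝ) : ℝ := (1 / (2 * π)) * ∫ z in (0:ℝ)..(2 * π), Wf v z

lemma Dop_ff (v : ℝ → ℝ) (x : ℝ) :
    Dop (fun y => v y + (1 / 2) * (deriv v y) ^ 2) x = Wf v x - cc v := rfl

/-- The "exact derivative" part of the integrand. -/
noncomputable def Hf (γ : ℝ) (v : ℝ → ℝ) : ℝ → ℝ := fun x =>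
  -(1 / 2) * (v x * (deriv v x) ^ 2) - (γ / 24) * (deriv v x) ^ 4
    + deriv v x * (Wf v x - cc v) + mm v * v x

/-- The derivative of `Hf`. -/
noncomputable def EH (γ : ℝ) (v : ℝ → ℝ) : ℝ → ℝ := fun x =>
  -(1 / 2) * (deriv v x * (deriv v x) ^ 2 + v x * (2 * deriv v x * deriv (deriv v) x))
    - (γ / 24) * (4 * (deriv v x) ^ 3 * deriv (deriv v) x)
    + (deriv (deriv v) x * (Wf v x - cc v) + deriv v x * (ff v x - mm v))
    + mm v * deriv v x

end MHSaux

open MHSaux MeasureTheory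

/-- The constant term `𝒞(v)` in the integral form of the modified Hunter–Saxton equation
equals `(γ/(12π)) ∫₀^{2π} v_x³ dx`. -/
theorem modifiedHunterSaxton_constant_term (γ : ℝ) (v : ℝ → ℝ)
    (hv : ContDiff ℝ 2 v) (hper : Function.Periodic v (2 * π)) :
    (1 / (2 * π)) * ∫ x in (0:ℝ)..(2 * π),
        (1 - deriv (deriv v) x) *
          ((1 / 2) * deriv (fun y => (v y) ^ 2) x + (γ / 6) * (deriv v x) ^ 3 -
            Dop (fun y => v y + (1 / 2) * (deriv v y) ^ 2) x)
      = (γ / (12 * π)) * ∫ x in (0:ℝ)..(2 * π), (deriv v x) ^ 3 := by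
  have hπ : π ≠ 0 := Real.pi_ne_zero
  -- regularity
  have hv2 : ContDiff ℝ (1 + 1) v := by exact_mod_cast hv
  have hvd : Differentiable ℝ v := hv.differentiable two_ne_zero
  have hu1 : ContDiff ℝ 1 (deriv v) := (contDiff_succ_iff_deriv.mp hv2).2.2
  have hud : Differentiable ℝ (deriv v) := hu1.differentiable one_ne_zero
  have hcv : Continuous v := hvd.continuous
  have hcu : Continuous (deriv v) := hud.continuous
  have hcu' : Continuous (deriv (deriv v)) := (contDiff_one_iff_deriv.mp hu1).2
  have hcf : Continuous (ff v) := by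
    unfold MHSaux.ff; exact hcv.add (continuous_const.mul (hcu.pow 2))
  have hdv : ∀ x, HasDerivAt v (deriv v x) x := fun x => (hvd x).hasDerivAt
  have hdu : ∀ x, HasDerivAt (deriv v) (deriv (deriv v) x) x := fun x => (hud x).hasDerivAt
  -- W
  have hWd : ∀ x, HasDerivAt (Wf v) (ff v x - mm v) x := fun x =>
    ((hcf.sub continuous_const).integral_hasStrictDerivAt 0 x).hasDerivAt
  have hcW : Continuous (Wf v) := by
    rw [continuous_iff_continuousAt]; exact fun x => (hWd x).continuousAt
  -- periodicity
  have hpu : Function.Periodic (deriv v) (2 * π) := periodic_deriv hper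
  have hpf : Function.Periodic (fun y => ff v y - mm v) (2 * π) := fun x => by
    simp only [MHSaux.ff, hper x, hpu x]
  have hintfm : ∀ a b : ℝ,
      IntervalIntegrable (fun y => ff v y - mm v) volume a b := fun a b =>
    (hcf.sub continuous_const).intervalIntegrable a b
  have hint0 : (∫ y in (0:ℝ)..(2 * π), (ff v y - mm v)) = 0 := by
    rw [intervalIntegral.integral_sub (hcf.intervalIntegrable _ _) intervalIntegrable_const,
      intervalIntegral.integral_const]
    simp only [MHSaux.mm, fmean, smul_eq_mul, sub_zero]
    field_simp
    ring
  have hpW : Function.Periodic (Wf v) (2 * π) := by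
    intro x
    have h1 : Wf v (x + 2 * π)
        = Wf v x + ∫ y in x..(x + 2 * π), (ff v y - mm v) := by
      simp only [MHSaux.Wf]
      rw [intervalIntegral.integral_add_adjacent_intervals (hintfm 0 x) (hintfm x _)]
    have h2 : (∫ y in x..(x + 2 * π), (ff v y - mm v))
        = ∫ y in (0:ℝ)..(0 + 2 * π), (ff v y - mm v) := hpf.intervalIntegral_add_eq x 0
    rw [h1, h2]
    simpa using hint0
  -- derivative of H
  have hHd : ∀ x, HasDerivAt (Hf γ v) (EH γ v x) x := by
    intro x
    have h1 : HasDerivAt (fun y => v y * (deriv v y) ^ 2)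
        (deriv v x * (deriv v x) ^ 2 + v x * (2 * deriv v x * deriv (deriv v) x)) x := by
      have := (hdv x).mul ((hdu x).fun_pow 2)
      exact this.congr_deriv (by push_cast; ring)
    have h2 : HasDerivAt (fun y => (deriv v y) ^ 4)
        (4 * (deriv v x) ^ 3 * deriv (deriv v) x) x := by
      have := (hdu x).fun_pow 4
      exact this.congr_deriv (by push_cast; ring)
    have h3 := (hdu x).mul ((hWd x).sub_const (cc v))
    have h4 := (hdv x).const_mul (mm v)
    exact (((h1.const_mul (-(1 / 2))).sub (h2.const_mul (γ / 24))).add h3).add h4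
  have hcEH : Continuous (EH γ v) := by
    unfold MHSaux.EH MHSaux.ff
    continuity
  have hHper : Hf γ v (2 * π) = Hf γ v 0 := by
    have e1 : v (2 * π) = v 0 := by simpa using hper 0
    have e2 : deriv v (2 * π) = deriv v 0 := by simpa using hpu 0
    have e3 : Wf v (2 * π) = Wf v 0 := by simpa using hpW 0
    simp only [MHSaux.Hf, e1, e2, e3]
  have hintEH : (∫ x in (0:ℝ)..(2 * π), EH γ v x) = 0 := by
    rw [intervalIntegral.integral_eq_sub_of_hasDerivAt (fun x _ => hHd x)
      (hcEH.intervalIntegrable _ _), hHper, sub_self]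
  have hWc0 : (∫ x in (0:ℝ)..(2 * π), (Wf v x - cc v)) = 0 := by
    rw [intervalIntegral.integral_sub (hcW.intervalIntegrable _ _) intervalIntegrable_const,
      intervalIntegral.integral_const]
    simp only [MHSaux.cc, smul_eq_mul, sub_zero]
    field_simp
    ring
  -- main pointwise identity and integral computation
  have hmain : (∫ x in (0:ℝ)..(2 * π),
      (1 - deriv (deriv v) x) *
        ((1 / 2) * deriv (fun y => (v y) ^ 2) x + (γ / 6) * (deriv v x) ^ 3 -
          Dop (fun y => v y + (1 / 2) * (deriv v y) ^ 2) x))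
      = (γ / 6) * ∫ x in (0:ℝ)..(2 * π), (deriv v x) ^ 3 := by
    have hcong : ∀ x ∈ Set.uIcc (0:ℝ) (2 * π),
        (1 - deriv (deriv v) x) *
          ((1 / 2) * deriv (fun y => (v y) ^ 2) x + (γ / 6) * (deriv v x) ^ 3 -
            Dop (fun y => v y + (1 / 2) * (deriv v y) ^ 2) x)
        = ((γ / 6) * (deriv v x) ^ 3 - (Wf v x - cc v)) + EH γ v x := by
      intro x _
      rw [Dop_ff]
      have hp2 : deriv (fun y => (v y) ^ 2) x = 2 * v x * deriv v x := by
        rw [((hdv x).fun_pow 2).deriv]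
        push_cast
        ring
      rw [hp2]
      simp only [MHSaux.EH, MHSaux.ff]
      ring
    rw [intervalIntegral.integral_congr hcong]
    have intA : IntervalIntegrable (fun x => (γ / 6) * (deriv v x) ^ 3) volume 0 (2 * π) :=
      (continuous_const.mul (hcu.pow 3)).intervalIntegrable _ _
    have intB : IntervalIntegrable (fun x => Wf v x - cc v) volume 0 (2 * π) :=
      (hcW.sub continuous_const).intervalIntegrable _ _
    rw [intervalIntegral.integral_add (intA.sub intB) (hcEH.intervalIntegrable _ _),
      intervalIntegral.integral_sub intA intB, hintEH, hWc0,
      intervalIntegral.integral_const_mul]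
    ring
  rw [hmain, ← mul_assoc]
  congr 1
  ring
end
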